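/- arXiv:1012.5617 — 4 statements merged into one kernel-verified Lean document; each statement's English description precedes it below -/
import Mathlib

section
/- Every nonempty smooth word over {1,2} (a word in which neither 111 nor 222 occurs and which is arbitrarily often differentiable) has at most 8 primitives, where a primitive of w is a word v with D(v) = w. -/
/-- Run lengths of a word: lengths of maximal blocks of equal letters. -/
def runLengths (w : List ℕ) : List ℕ :=
  (w.splitBy (· = ·)).map List.length

/-- The run-length derivative: run lengths, discarding the first and/or last
run if it has length one. -/
def wderiv (w : List ℕ) : List ℕ :=
  let r := runLengths w
  let r1 := if r.head? = some 1 then r.tail else r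
  if r1.getLast? = some 1 then r1.dropLast else r1

/-- `w` is a word over the alphabet {1,2}. -/
def IsWord (w : List ℕ) : Prop := ∀ a ∈ w, a = 1 ∨ a = 2

/-- `w` is differentiable: a word over {1,2} avoiding 111 and 222. -/
def Differentiable' (w : List ℕ) : Prop :=
  IsWord w ∧ ¬ ([1,1,1] <:+: w) ∧ ¬ ([2,2,2] <:+: w)

/-- `w` is smooth (C^∞): arbitrarily often differentiable. -/
def SmoothWord (w : List ℕ) : Prop := ∀ k : ℕ, Differentiable' (wderiv^[k] w)

/-- The height of a smooth word: least `k` with `D^k(w) = ε`. -/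
noncomputable def height (w : List ℕ) : ℕ := sInf {k | wderiv^[k] w = []}

/-- `P^k(ε)`: the set of smooth words of height `k`. -/
def Pk (k : ℕ) : Set (List ℕ) := {w | SmoothWord w ∧ height w = k}

/-- `v` is a primitive of `w`: a smooth word with `D(v) = w`. -/
def Primitive (v w : List ℕ) : Prop := SmoothWord v ∧ wderiv v = w

/-- Simple right extension: `w = uα` for a letter `α ∈ {1,2}`. -/
def SRE (u w : List ℕ) : Prop := ∃ α, (α = 1 ∨ α = 2) ∧ w = u ++ [α]

/-- Maximal right smooth extension (MRSE) chain of height `k`,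
represented as the (nonempty) list of its members. -/
def MRSE (k : ℕ) (c : List (List ℕ)) : Prop :=
  c ≠ [] ∧ (∀ u ∈ c, u ∈ Pk k) ∧ c.Chain' SRE ∧
  (∀ v ∈ Pk k, ∀ u₁, c.head? = some u₁ → ¬ SRE v u₁) ∧
  (∀ v ∈ Pk k, ∀ um, c.getLast? = some um → ¬ SRE um v)

/-- `H^k`: the set of MRSE chains of height `k`. -/
def Hset (k : ℕ) : Set (List (List ℕ)) := {c | MRSE k c}

/-- Letter complement: swaps 1 and 2. -/
def bar (a : ℕ) : ℕ := if a = 1 then 2 else 1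

def fromRuns : ℕ → List ℕ → List ℕ
  | _, [] => []
  | a, n :: r => List.replicate n a ++ fromRuns (bar a) r

lemma bar_of_ne {a b : ℕ} (ha : a = 1 ∨ a = 2) (hb : b = 1 ∨ b = 2) (h : a ≠ b) :
    b = bar a := by
  rcases ha with rfl | rfl <;> rcases hb with rfl | rfl <;> simp_all [bar]

lemma chain'_eq_replicate : ∀ (m : List ℕ), m.Chain' (fun x y => x = y) →
    ∀ a, m.head? = some a → m = List.replicate m.length a := by
  intro m
  induction m with
  | nil => simp
  | cons x t ih =>
    intro hc a ha
    simp only [List.head?_cons, Option.some.injEq] at ha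
    subst ha
    cases t with
    | nil => simp
    | cons y t' =>
      simp only [List.Chain', List.isChain_cons_cons] at hc
      obtain ⟨h1, hc⟩ := hc
      subst h1
      have ht := ih hc x (by simp)
      rw [List.length_cons, List.replicate_succ]
      rw [← ht]

lemma flatten_eq_fromRuns : ∀ (cs : List (List ℕ)),
    (∀ m ∈ cs, m ≠ []) →
    (∀ m ∈ cs, m.Chain' (fun x y => x = y)) →
    cs.Chain' (fun a b => ∀ (ha : a ≠ []) (hb : b ≠ []), a.getLast ha ≠ b.head hb) →
    (∀ x ∈ cs.flatten, x = 1 ∨ x = 2) →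
    cs.flatten = fromRuns (cs.flatten.headD 1) (cs.map List.length) := by
  intro cs
  induction cs with
  | nil => simp [fromRuns]
  | cons m cs ih =>
    intro hne hconst hchain hw
    have hm : m ≠ [] := hne m (by simp)
    set a := m.head hm with ha
    have hma : m = List.replicate m.length a :=
      chain'_eq_replicate m (hconst m (by simp)) a (List.head?_eq_head hm)
    have hflathead : (m :: cs).flatten.headD 1 = a := by
      rw [List.flatten_cons, List.headD_eq_head?, List.head?_append_of_ne_nil _ hm,
        List.head?_eq_head hm]
      rfl
    rw [hflathead, List.flatten_cons, List.map_cons, fromRuns]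
    conv_rhs => rw [← hma]
    congr 1
    rcases cs with _ | ⟨m', cs'⟩
    · simp [fromRuns]
    · have hm' : m' ≠ [] := hne m' (by simp)
      have hlast : m.getLast hm = a := by
        apply List.eq_of_mem_replicate (n := m.length)
        rw [← hma]
        exact List.getLast_mem hm
      have hchain' := (List.isChain_cons_cons.1 hchain).1 hm hm'
      rw [hlast] at hchain'
      have hb : m'.head hm' = bar a := by
        apply bar_of_ne
        · exact hw a (List.mem_flatten.2 ⟨m, by simp, List.head_mem hm⟩)
        · exact hw _ (List.mem_flatten.2 ⟨m', by simp, List.head_mem hm'⟩)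
        · exact hchain'
      have hhead : (m' :: cs').flatten.headD 1 = bar a := by
        rw [List.flatten_cons, List.headD_eq_head?, List.head?_append_of_ne_nil _ hm',
          List.head?_eq_head hm', ← hb]
        rfl
      have := ih (fun x hx => hne x (by simp [hx])) (fun x hx => hconst x (by simp [hx]))
        (List.isChain_cons_cons.1 hchain).2
        (fun x hx => hw x (by rw [List.flatten_cons]; exact List.mem_append_right _ hx))
      rw [hhead] at this
      exact this

lemma word_eq_fromRuns (v : List ℕ) (hv : IsWord v) :
    v = fromRuns (v.headD 1) (runLengths v) := by
  have h1 : ∀ m ∈ v.splitBy (· = ·), m ≠ [] := fun m hm => List.ne_nil_of_mem_splitBy hm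
  have h2 : ∀ m ∈ v.splitBy (· = ·), m.Chain' (fun x y => x = y) := by
    intro m hm
    exact (List.isChain_of_mem_splitBy hm).imp (fun x y h => by simpa using h)
  have h3 : (v.splitBy (· = ·)).Chain'
      (fun a b => ∀ (ha : a ≠ []) (hb : b ≠ []), a.getLast ha ≠ b.head hb) := by
    refine (List.isChain_getLast_head_splitBy _ v).imp ?_
    rintro a b ⟨ha, hb, h⟩ ha' hb'
    simpa using h
  have h4 : ∀ x ∈ (v.splitBy (· = ·)).flatten, x = 1 ∨ x = 2 := by
    rw [List.flatten_splitBy]; exact hv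
  have := flatten_eq_fromRuns _ h1 h2 h3 h4
  rwa [List.flatten_splitBy] at this

lemma runs_cases (v w : List ℕ) (hD : wderiv v = w) :
    runLengths v = w ∨ runLengths v = 1 :: w ∨ runLengths v = w ++ [1] ∨
      runLengths v = 1 :: (w ++ [1]) := by
  simp only [wderiv] at hD
  split_ifs at hD with h1 h2 h2
  · have e2 : (runLengths v).tail = w ++ [1] := by
      rw [← hD]; exact (List.dropLast_append_getLast? 1 h2).symm
    have e1 : runLengths v = 1 :: (runLengths v).tail := List.eq_cons_of_mem_head? h1
    rw [e1, e2]; tauto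
  · have e1 : runLengths v = 1 :: (runLengths v).tail := List.eq_cons_of_mem_head? h1
    rw [e1, hD]; tauto
  · have e2 : runLengths v = w ++ [1] := by
      rw [← hD]; exact (List.dropLast_append_getLast? 1 h2).symm
    rw [e2]; tauto
  · rw [hD]; tauto

/-- Every nonempty smooth word has at most 8 primitives. -/
theorem stmt0 (w : List ℕ) (hw : SmoothWord w) (hne : w ≠ []) :
    {v | Primitive v w}.Finite ∧ {v | Primitive v w}.ncard ≤ 8 := by
  set S : Set (List ℕ) := {fromRuns 1 w, fromRuns 2 w, fromRuns 1 (1 :: w),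
    fromRuns 2 (1 :: w), fromRuns 1 (w ++ [1]), fromRuns 2 (w ++ [1]),
    fromRuns 1 (1 :: (w ++ [1])), fromRuns 2 (1 :: (w ++ [1]))} with hS
  have hsub : {v | Primitive v w} ⊆ S := by
    rintro v ⟨hs, hD⟩
    have hvword : IsWord v := (hs 0).1
    have hvne : v ≠ [] := by
      rintro rfl
      apply hne; rw [← hD]; rfl
    have hh : v.headD 1 = v.head hvne := by
      rw [List.headD_eq_head?, List.head?_eq_head hvne]; rfl
    have hhead : v.headD 1 = 1 ∨ v.headD 1 = 2 := by
      rw [hh]; exact hvword _ (List.head_mem hvne)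
    have hrec := word_eq_fromRuns v hvword
    rcases runs_cases v w hD with h | h | h | h <;> rw [h] at hrec <;>
      rcases hhead with h' | h' <;> rw [h'] at hrec <;> simp [hS, hrec]
  have hfin : S.Finite := by
    rw [hS]
    exact (((((((Set.finite_singleton _).insert _).insert _).insert _).insert
      _).insert _).insert _).insert _
  have h8 : S.ncard ≤ 8 := by
    rw [hS]
    refine (Set.ncard_insert_le _ _).trans (Nat.succ_le_succ ?_)
    refine (Set.ncard_insert_le _ _).trans (Nat.succ_le_succ ?_)
    refine (Set.ncard_insert_le _ _).trans (Nat.succ_le_succ ?_)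
    refine (Set.ncard_insert_le _ _).trans (Nat.succ_le_succ ?_)
    refine (Set.ncard_insert_le _ _).trans (Nat.succ_le_succ ?_)
    refine (Set.ncard_insert_le _ _).trans (Nat.succ_le_succ ?_)
    refine (Set.ncard_insert_le _ _).trans (Nat.succ_le_succ ?_)
    exact (Set.ncard_singleton _).le
  exact ⟨hfin.subset hsub, (Set.ncard_le_ncard hsub hfin).trans h8⟩
end

section
/- If v and v' are two primitives of the same smooth word w, then the lengths of v and v' differ by at most 2. -/
lemma sum_tail_of_head (r : List ℕ) (h : r.head? = some 1) : r.sum = r.tail.sum + 1 := by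
  cases r with
  | nil => simp at h
  | cons a t => simp at h; simp [h, Nat.add_comm]

lemma sum_dropLast_of_last (r : List ℕ) (h : r.getLast? = some 1) : r.sum = r.dropLast.sum + 1 := by
  have : r = r.dropLast ++ [1] := by
    conv_lhs => rw [← List.dropLast_append_getLast? 1 h]
  rw [this]; simp

lemma sum_runLengths (v : List ℕ) : (runLengths v).sum = v.length := by
  unfold runLengths
  rw [← List.length_flatten, List.flatten_splitBy]

lemma wderiv_bounds (v : List ℕ) :
    (wderiv v).sum ≤ v.length ∧ v.length ≤ (wderiv v).sum + 2 := by
  unfold wderiv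
  have hr := sum_runLengths v
  set r := runLengths v with hrdef
  simp only []
  split_ifs with h1 h2 h3
  · rw [sum_tail_of_head r h1, sum_dropLast_of_last _ h2] at hr; omega
  · rw [sum_tail_of_head r h1] at hr; omega
  · rw [sum_dropLast_of_last _ h3] at hr; omega
  · omega

/-- Two primitives of the same smooth word have lengths differing by at most 2. -/
theorem stmt1 (w v v' : List ℕ) (hw : SmoothWord w)
    (h : Primitive v w) (h' : Primitive v' w) :
    |(v.length : ℤ) - (v'.length : ℤ)| ≤ 2 := by
  have b1 := wderiv_bounds v
  have b2 := wderiv_bounds v'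
  rw [h.2] at b1
  rw [h'.2] at b2
  rw [abs_le]
  omega
end

section
/- Suppose θ > 0 and n₀ are such that every smooth word u with |u| > n₀ satisfies |u|₂/|u| > θ. Then there is a constant t₁ such that every smooth word w satisfies ht(w) > (log |w|)/(log(2−θ)) + t₁; equivalently, |w| < t·(2−θ)^(ht(w)−1) for a suitable constant t. -/
def rl : List ℕ → List ℕ
  | [] => []
  | [_] => [1]
  | a :: b :: l => if a = b then (rl (b :: l)).modifyHead (· + 1) else 1 :: rl (b :: l)

theorem loop_gs (R : ℕ → ℕ → Bool) :
    ∀ (l : List ℕ) (a : ℕ) (g : List ℕ) (gs : List (List ℕ)),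
      List.splitBy.loop R l a g gs = gs.reverse ++ List.splitBy.loop R l a g [] := by
  intro l
  induction l with
  | nil => intro a g gs; simp [List.splitBy.loop]
  | cons b l ih =>
    intro a g gs
    rw [List.splitBy.loop, List.splitBy.loop]
    cases R a b with
    | true => simp only; rw [ih b (a :: g) gs, ih b (a :: g) []]
    | false =>
      simp only
      rw [ih b [] ((a :: g).reverse :: gs), ih b [] [(a :: g).reverse]]
      simp

theorem loop_len (R : ℕ → ℕ → Bool) :
    ∀ (l : List ℕ) (a : ℕ) (g : List ℕ),
      (List.splitBy.loop R l a g []).map List.length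
        = ((List.splitBy.loop R l a [] []).map List.length).modifyHead (· + g.length) := by
  intro l
  induction l with
  | nil => intro a g; simp [List.splitBy.loop, Nat.add_comm]
  | cons b l ih =>
    intro a g
    rw [List.splitBy.loop, List.splitBy.loop]
    cases R a b with
    | true =>
      simp only
      rw [ih b (a :: g), ih b [a]]
      cases h : (List.splitBy.loop R l b [] []).map List.length with
      | nil => simp
      | cons c cs => simp [Nat.add_comm, Nat.add_assoc, Nat.add_left_comm]
    | false =>
      simp only
      rw [loop_gs R l b [] ((a :: g).reverse :: []), loop_gs R l b [] [[a].reverse]]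
      simp [Nat.add_comm]

theorem runLengths_cons₂ (a b : ℕ) (l : List ℕ) :
    runLengths (a :: b :: l) = if a = b then (runLengths (b :: l)).modifyHead (· + 1)
      else 1 :: runLengths (b :: l) := by
  unfold runLengths
  rw [List.splitBy, List.splitBy, List.splitBy.loop]
  by_cases hab : a = b
  · subst hab
    rw [if_pos rfl, show decide (a = a) = true from decide_eq_true rfl]
    simp only []
    rw [loop_len]
    cases h : (List.splitBy.loop (fun x1 x2 => decide (x1 = x2)) l a [] []).map List.length with
    | nil => simp
    | cons c cs => simp [Nat.add_comm]
  · rw [if_neg hab, show decide (a = b) = false from decide_eq_false hab]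
    simp only []
    rw [loop_gs]
    simp

theorem runLengths_eq_rl : ∀ w : List ℕ, runLengths w = rl w := by
  intro w
  induction w with
  | nil => rfl
  | cons a l ih =>
    cases l with
    | nil => rfl
    | cons b l =>
      rw [runLengths_cons₂, rl, ih]

theorem rl_sum : ∀ w : List ℕ, (rl w).sum = w.length := by
  intro w
  induction w with
  | nil => rfl
  | cons a l ih =>
    cases l with
    | nil => rfl
    | cons b l =>
      rw [rl]
      by_cases hab : a = b
      · rw [if_pos hab]
        cases h : rl (b :: l) with
        | nil => exact absurd (h ▸ ih) (by simp)
        | cons c cs =>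
          rw [h] at ih
          simp only [List.modifyHead, List.sum_cons, List.length_cons] at *
          omega
      · rw [if_neg hab]
        simp only [List.sum_cons, List.length_cons, ih]
        omega

theorem rl_ne_nil : ∀ (a : ℕ) (l : List ℕ), rl (a :: l) ≠ [] := by
  intro a l
  induction l generalizing a with
  | nil => simp [rl]
  | cons b l ih =>
    rw [rl]
    by_cases hab : a = b
    · rw [if_pos hab]
      intro h
      exact ih b (by simpa using congrArg List.length h)
    · simp [if_neg hab]

theorem rl_pos : ∀ (w : List ℕ), ∀ r ∈ rl w, 1 ≤ r := by
  intro w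
  induction w with
  | nil => simp [rl]
  | cons a l ih =>
    cases l with
    | nil => simp [rl]
    | cons b l =>
      rw [rl]
      by_cases hab : a = b
      · rw [if_pos hab]
        cases h : rl (b :: l) with
        | nil => simp
        | cons c cs =>
          intro r hr
          rw [List.modifyHead] at hr
          rcases List.mem_cons.1 hr with h' | h'
          · omega
          · exact ih r (h ▸ List.mem_cons_of_mem c h')
      · rw [if_neg hab]
        intro r hr
        rcases List.mem_cons.1 hr with h' | h'
        · omega
        · exact ih r h'

theorem all_one (u : List ℕ) (hpos : ∀ r ∈ u, 1 ≤ r) (hs : u.sum = u.length) :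
    ∀ r ∈ u, r = 1 := by
  induction u with
  | nil => simp
  | cons c cs ih =>
    have hcs_le : cs.length ≤ cs.sum :=
      List.length_le_sum_of_one_le _ (fun r hr => hpos r (List.mem_cons_of_mem _ hr))
    have hc := hpos c List.mem_cons_self
    simp only [List.sum_cons, List.length_cons] at hs
    intro r hr
    rcases List.mem_cons.1 hr with rfl | h'
    · omega
    · exact ih (fun r hr => hpos r (List.mem_cons_of_mem _ hr)) (by omega) r h'

theorem rl_all_one (w : List ℕ) (h : (rl w).length = w.length) : ∀ r ∈ rl w, r = 1 :=
  all_one _ (rl_pos w) (by rw [rl_sum w, h])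

theorem rl_length_le (w : List ℕ) : (rl w).length ≤ w.length := by
  rw [← rl_sum w]
  exact List.length_le_sum_of_one_le _ (rl_pos w)

theorem wderiv_nil : wderiv [] = [] := rfl

theorem wderiv_length_lt (w : List ℕ) (hw : w ≠ []) : (wderiv w).length < w.length := by
  have key : (if (rl w).head? = some 1 then (rl w).tail else (rl w)).length < w.length := by
    rcases eq_or_lt_of_le (rl_length_le w) with heq | hlt
    · cases hrl : rl w with
      | nil =>
        rw [hrl] at heq; simp only [List.length_nil] at heq
        exact absurd (List.length_eq_zero_iff.mp heq.symm) hw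
      | cons c cs =>
        have hc1 : c = 1 := rl_all_one w heq c (by rw [hrl]; simp)
        have hlen : (c :: cs).length = w.length := by rw [← hrl]; exact heq
        rw [if_pos (by simp [hc1])]
        simp only [List.length_cons] at hlen
        simp only [List.tail_cons]
        omega
    · split
      · exact lt_of_le_of_lt (by rw [List.length_tail]; exact Nat.sub_le _ _) hlt
      · exact hlt
  have mono : ∀ r1 : List ℕ, r1.length < w.length →
      (if r1.getLast? = some 1 then r1.dropLast else r1).length < w.length := by
    intro r1 h
    split
    · exact lt_of_le_of_lt (by rw [List.length_dropLast]; exact Nat.sub_le _ _) h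
    · exact h
  unfold wderiv
  simp only [runLengths_eq_rl]
  exact mono _ key

theorem sum_tail_ge (r : List ℕ) (h : r.head? = some 1) : r.sum ≤ r.tail.sum + 1 := by
  cases r with
  | nil => simp at h
  | cons a t => simp only [List.head?_cons, Option.some_inj] at h; simp [h, Nat.add_comm]

theorem sum_dropLast_ge (r : List ℕ) (h : r.getLast? = some 1) :
    r.sum ≤ r.dropLast.sum + 1 := by
  have hne : r ≠ [] := by rintro rfl; simp at h
  have hlast : r.getLast hne = 1 := by
    rwa [List.getLast?_eq_getLast hne, Option.some_inj] at h
  conv_lhs => rw [← List.dropLast_append_getLast hne]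
  simp [hlast]

theorem wderiv_sum_ge (w : List ℕ) : w.length ≤ (wderiv w).sum + 2 := by
  unfold wderiv
  simp only [runLengths_eq_rl]
  rw [← rl_sum w]
  have h1 : (rl w).sum ≤ (if (rl w).head? = some 1 then (rl w).tail else rl w).sum + 1 := by
    split
    · exact sum_tail_ge _ ‹_›
    · omega
  set r1 := if (rl w).head? = some 1 then (rl w).tail else rl w with hr1
  have h2 : r1.sum ≤ (if r1.getLast? = some 1 then r1.dropLast else r1).sum + 1 := by
    split
    · exact sum_dropLast_ge _ ‹_›
    · omega
  omega

theorem bar_mem (a : ℕ) : bar a = 1 ∨ bar a = 2 := by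
  unfold bar; split <;> simp

theorem bar_bar {a : ℕ} (h : a = 1 ∨ a = 2) : bar (bar a) = a := by
  rcases h with rfl | rfl <;> rfl

theorem bar_inj {a b : ℕ} (ha : a = 1 ∨ a = 2) (hb : b = 1 ∨ b = 2) :
    (bar a = bar b) ↔ a = b := by
  rcases ha with rfl | rfl <;> rcases hb with rfl | rfl <;> simp [bar]

theorem rl_map_bar : ∀ w : List ℕ, IsWord w → rl (w.map bar) = rl w := by
  intro w
  induction w with
  | nil => intro _; rfl
  | cons a l ih =>
    intro hw
    cases l with
    | nil => rfl
    | cons b l =>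
      have hw' : IsWord (b :: l) := fun x hx => hw x (List.mem_cons_of_mem _ hx)
      have ha : a = 1 ∨ a = 2 := hw a (by simp)
      have hb : b = 1 ∨ b = 2 := hw b (by simp)
      simp only [List.map_cons] at *
      rw [rl, rl]
      by_cases hab : a = b
      · rw [if_pos ((bar_inj ha hb).mpr hab), if_pos hab, ih hw']
      · rw [if_neg (fun hc => hab ((bar_inj ha hb).mp hc)), if_neg hab, ih hw']

theorem wderiv_map_bar (w : List ℕ) (hw : IsWord w) : wderiv (w.map bar) = wderiv w := by
  unfold wderiv
  simp only [runLengths_eq_rl, rl_map_bar w hw]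

/-! ### triples and run lengths -/

theorem triple_rl {x : ℕ} : ∀ {w : List ℕ}, [x, x, x] <:+: w → ∃ r ∈ rl w, 3 ≤ r := by
  intro w
  induction w with
  | nil => intro h; exact absurd (List.eq_nil_of_infix_nil h) (by simp)
  | cons a w' ih =>
    intro h
    rcases h with ⟨s, t, hst⟩
    cases s with
    | cons a' s' =>
      have h' : [x,x,x] <:+: w' := by
        simp only [List.cons_append, List.cons.injEq] at hst
        exact ⟨s', t, hst.2⟩
      obtain ⟨r, hr, h3⟩ := ih h'
      cases hw' : w' with
      | nil => rw [hw'] at hr; simp [rl] at hr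
      | cons b l =>
        rw [hw'] at hr
        rw [rl]
        by_cases hab : a = b
        · rw [if_pos hab]
          cases hbl : rl (b :: l) with
          | nil => exact absurd hbl (rl_ne_nil b l)
          | cons c cs =>
            rw [hbl] at hr
            rcases List.mem_cons.1 hr with rfl | hmem
            · exact ⟨r + 1, by simp [List.modifyHead], by omega⟩
            · exact ⟨r, by simp [List.modifyHead, hmem], h3⟩
        · rw [if_neg hab]
          exact ⟨r, List.mem_cons_of_mem _ hr, h3⟩
    | nil =>
      simp only [List.nil_append, List.cons_append, List.cons.injEq] at hst
      obtain ⟨rfl, hst⟩ := hst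
      have hw' : w' = x :: x :: t := by simpa using hst.symm
      subst hw'
      cases hrl : rl (x :: t) with
      | nil => exact absurd hrl (rl_ne_nil x t)
      | cons c cs =>
        have hc : 1 ≤ c := rl_pos (x :: t) c (by rw [hrl]; simp)
        refine ⟨c + 2, ?_, by omega⟩
        rw [rl, if_pos rfl, rl, if_pos rfl, hrl]
        simp [List.modifyHead]

/-! ### expand -/

def expand : List ℕ → ℕ → List ℕ
  | [], _ => []
  | a :: l, b => List.replicate a b ++ expand l (bar b)

theorem bar_ne {b : ℕ} (hb : b = 1 ∨ b = 2) : bar b ≠ b := by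
  rcases hb with rfl | rfl <;> simp [bar]

theorem expand_head : ∀ (a : ℕ) (l : List ℕ) (b : ℕ), 1 ≤ a →
    ∃ t, expand (a :: l) b = b :: t := by
  intro a l b ha
  cases a with
  | zero => omega
  | succ n =>
    refine ⟨List.replicate n b ++ expand l (bar b), ?_⟩
    simp [expand, List.replicate_succ]

theorem rl_expand : ∀ (l : List ℕ), (∀ x ∈ l, x = 1 ∨ x = 2) → ∀ b, (b = 1 ∨ b = 2) →
    rl (expand l b) = l := by
  intro l
  induction l with
  | nil => intro _ b _; rfl
  | cons a l ih =>
    intro hl b hb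
    have ha : a = 1 ∨ a = 2 := hl a (by simp)
    have hl' : ∀ x ∈ l, x = 1 ∨ x = 2 := fun x hx => hl x (List.mem_cons_of_mem _ hx)
    have ihl := ih hl' (bar b) (bar_mem b)
    cases l with
    | nil =>
      rcases ha with rfl | rfl <;> simp [expand, rl]
    | cons c l' =>
      have hc : 1 ≤ c := by rcases hl' c (by simp) with rfl | rfl <;> omega
      obtain ⟨t, ht⟩ := expand_head c l' (bar b) hc
      rcases ha with rfl | rfl
      · show rl (List.replicate 1 b ++ expand (c :: l') (bar b)) = _
        rw [ht]
        show rl (b :: bar b :: t) = _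
        rw [rl, if_neg (Ne.symm (bar_ne hb)), ← ht, ihl]
      · show rl (List.replicate 2 b ++ expand (c :: l') (bar b)) = _
        rw [ht]
        show rl (b :: b :: bar b :: t) = _
        rw [rl, if_pos rfl, rl, if_neg (Ne.symm (bar_ne hb)), ← ht, ihl]
        simp [List.modifyHead]

theorem isWord_expand : ∀ (l : List ℕ) (b : ℕ), (b = 1 ∨ b = 2) → IsWord (expand l b) := by
  intro l
  induction l with
  | nil => intro b _; intro x hx; simp [expand] at hx
  | cons a l ih =>
    intro b hb x hx
    simp only [expand, List.mem_append, List.mem_replicate] at hx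
    rcases hx with ⟨_, rfl⟩ | hx
    · exact hb
    · exact ih (bar b) (bar_mem b) x hx

theorem expand_length (l : List ℕ) : ∀ b, (expand l b).length = l.sum := by
  induction l with
  | nil => intro b; rfl
  | cons a l ih => intro b; simp [expand, ih]

/-! ### smoothness helpers -/

theorem smooth_deriv {w : List ℕ} (hw : SmoothWord w) : SmoothWord (wderiv w) := by
  intro k
  rw [← Function.iterate_succ_apply]
  exact hw (k + 1)

theorem smooth_isWord {w : List ℕ} (hw : SmoothWord w) : IsWord w := by
  have := hw 0
  exact this.1

theorem smooth_nil : SmoothWord [] := by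
  intro k
  have : wderiv^[k] ([] : List ℕ) = [] := by
    induction k with
    | zero => rfl
    | succ n ih => rw [Function.iterate_succ_apply', ih, wderiv_nil]
  rw [this]
  refine ⟨fun a ha => by simp at ha, ?_, ?_⟩ <;>
    · intro h
      have := List.eq_nil_of_infix_nil h
      simp at this

theorem primitive_smooth {w : List ℕ} (hw : SmoothWord w) :
    SmoothWord (expand (1 :: w ++ [1]) 1) ∧ wderiv (expand (1 :: w ++ [1]) 1) = w ∧
      w.length + 2 ≤ (expand (1 :: w ++ [1]) 1).length := by
  have hword : IsWord w := smooth_isWord hw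
  have hl : ∀ x ∈ (1 : ℕ) :: w ++ [1], x = 1 ∨ x = 2 := by
    intro x hx
    simp only [List.cons_append, List.mem_cons, List.mem_append, List.not_mem_nil, or_false] at hx
    rcases hx with rfl | hx | rfl
    · left; rfl
    · exact hword x hx
    · left; rfl
  set v := expand (1 :: w ++ [1]) 1 with hv
  have hrl : rl v = 1 :: w ++ [1] := rl_expand _ hl 1 (Or.inl rfl)
  have hd : wderiv v = w := by
    unfold wderiv
    rw [runLengths_eq_rl, hrl]
    simp [List.getLast?_concat, List.dropLast_concat]
  have hW : IsWord v := isWord_expand _ 1 (Or.inl rfl)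
  have hdiff : Differentiable' v := by
    refine ⟨hW, ?_, ?_⟩
    · intro h
      obtain ⟨r, hr, h3⟩ := triple_rl h
      rw [hrl] at hr
      simp only [List.cons_append, List.mem_cons, List.mem_append, List.not_mem_nil, or_false] at hr
      rcases hr with rfl | hr | rfl
      · omega
      · rcases hword r hr with rfl | rfl <;> omega
      · omega
    · intro h
      obtain ⟨r, hr, h3⟩ := triple_rl h
      rw [hrl] at hr
      simp only [List.cons_append, List.mem_cons, List.mem_append, List.not_mem_nil, or_false] at hr
      rcases hr with rfl | hr | rfl
      · omega
      · rcases hword r hr with rfl | rfl <;> omega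
      · omega
  refine ⟨?_, hd, ?_⟩
  · intro k
    cases k with
    | zero => exact hdiff
    | succ n =>
      rw [Function.iterate_succ_apply, hd]
      exact hw n
  · rw [hv, expand_length]
    have : w.length ≤ w.sum := List.length_le_sum_of_one_le _ (by
      intro x hx; rcases hword x hx with rfl | rfl <;> omega)
    simp only [List.cons_append, List.sum_cons, List.sum_append, List.sum_cons, List.sum_nil]
    omega

theorem exists_long_smooth : ∀ n : ℕ, ∃ u : List ℕ, SmoothWord u ∧ n ≤ u.length := by
  intro n
  induction n with
  | zero => exact ⟨[], smooth_nil, by simp⟩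
  | succ m ih =>
    obtain ⟨u, hu, hlen⟩ := ih
    obtain ⟨h1, _, h3⟩ := primitive_smooth hu
    exact ⟨_, h1, by omega⟩

theorem count_sum {u : List ℕ} (hu : IsWord u) : u.sum = u.length + u.count 2 := by
  induction u with
  | nil => rfl
  | cons a l ih =>
    have ha := hu a (by simp)
    have ih' := ih (fun x hx => hu x (List.mem_cons_of_mem _ hx))
    rcases ha with rfl | rfl <;>
      simp [List.count_cons, ih'] <;> omega

theorem count_one_two {u : List ℕ} (hu : IsWord u) : u.count 1 + u.count 2 = u.length := by
  induction u with
  | nil => rfl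
  | cons a l ih =>
    have ha := hu a (by simp)
    have ih' := ih (fun x hx => hu x (List.mem_cons_of_mem _ hx))
    rcases ha with rfl | rfl <;> simp [List.count_cons] <;> omega

theorem count_map_bar (u : List ℕ) : (u.map bar).count 2 = u.count 1 := by
  induction u with
  | nil => rfl
  | cons a l ih =>
    by_cases h : a = 1
    · subst h; simp [List.count_cons, bar, ih]
    · simp [List.count_cons, bar, h, ih]

/-! ### complement smooth -/

theorem map_bar_bar {w : List ℕ} (hw : IsWord w) : (w.map bar).map bar = w := by
  rw [List.map_map]
  have : ∀ x ∈ w, (bar ∘ bar) x = id x := fun x hx => bar_bar (hw x hx)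
  rw [List.map_congr_left this, List.map_id]

theorem smooth_bar {w : List ℕ} (hw : SmoothWord w) : SmoothWord (w.map bar) := by
  intro k
  cases k with
  | zero =>
    have h0 := hw 0
    simp only [Function.iterate_zero, id_eq] at h0 ⊢
    refine ⟨fun a ha => ?_, ?_, ?_⟩
    · obtain ⟨b, _, rfl⟩ := List.mem_map.1 ha
      exact bar_mem b
    · intro h
      have h2 : [2,2,2] <:+: (w.map bar).map bar := by
        have := List.IsInfix.map bar h
        simpa [bar] using this
      rw [map_bar_bar h0.1] at h2
      exact h0.2.2 h2
    · intro h
      have h2 : [1,1,1] <:+: (w.map bar).map bar := by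
        have := List.IsInfix.map bar h
        simpa [bar] using this
      rw [map_bar_bar h0.1] at h2
      exact h0.2.1 h2
  | succ n =>
    rw [Function.iterate_succ_apply, wderiv_map_bar w (smooth_isWord hw),
      ← Function.iterate_succ_apply]
    exact hw (n + 1)

/-! ### height -/

theorem iterate_wderiv_nil (k : ℕ) : wderiv^[k] ([] : List ℕ) = [] := by
  induction k with
  | zero => rfl
  | succ n ih => rw [Function.iterate_succ_apply', ih, wderiv_nil]

theorem wderiv_eventually_nil : ∀ (n : ℕ) (w : List ℕ), w.length ≤ n → wderiv^[n] w = [] := by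
  intro n
  induction n with
  | zero => intro w h; simpa using List.length_eq_zero_iff.1 (Nat.le_zero.1 h)
  | succ m ih =>
    intro w h
    by_cases hw : w = []
    · rw [hw]; exact iterate_wderiv_nil _
    · rw [Function.iterate_succ_apply]
      exact ih _ (by have := wderiv_length_lt w hw; omega)

theorem height_nil : height ([] : List ℕ) = 0 :=
  Nat.sInf_eq_zero.2 (Or.inl rfl)

theorem height_spec (w : List ℕ) : wderiv^[height w] w = [] := by
  have hne : {k | wderiv^[k] w = []}.Nonempty :=
    ⟨w.length, wderiv_eventually_nil _ _ le_rfl⟩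
  exact Nat.sInf_mem hne

theorem height_pos (w : List ℕ) (hw : w ≠ []) : 0 < height w := by
  rcases Nat.eq_zero_or_pos (height w) with h | h
  · have := height_spec w
    rw [h] at this
    exact absurd this hw
  · exact h

theorem height_succ (w : List ℕ) (hw : w ≠ []) : height w = height (wderiv w) + 1 := by
  have h1 : height (wderiv w) + 1 ∈ {k | wderiv^[k] w = []} := by
    show wderiv^[height (wderiv w) + 1] w = []
    rw [Function.iterate_succ_apply]
    exact height_spec (wderiv w)
  have hle : height w ≤ height (wderiv w) + 1 := Nat.sInf_le h1
  have hpos := height_pos w hw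
  have h2 : height w - 1 ∈ {k | wderiv^[k] (wderiv w) = []} := by
    show wderiv^[height w - 1] (wderiv w) = []
    rw [← Function.iterate_succ_apply]
    have h3 : height w - 1 + 1 = height w := by omega
    rw [show (height w - 1).succ = height w from h3]
    exact height_spec w
  have hge : height (wderiv w) ≤ height w - 1 := Nat.sInf_le h2
  omega

/-- Under a lower letter-frequency bound, `ht(w) > log|w| / log(2−θ) + t₁`;
equivalently `|w| < t·(2−θ)^(ht(w)−1)` for a suitable constant `t > 0`. -/
theorem stmt14 (θ : ℝ) (n₀ : ℕ) (hθ : 0 < θ)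
    (H : ∀ u : List ℕ, SmoothWord u → n₀ < u.length →
      θ < (u.count 2 : ℝ) / u.length) :
    ∃ t₁ t : ℝ, 0 < t ∧ ∀ w : List ℕ, SmoothWord w →
      (Real.log w.length / Real.log (2 - θ) + t₁ < (height w : ℝ)) ∧
      (w.length : ℝ) < t * (2 - θ) ^ (height w - 1) := by
  -- θ < 1
  have hθ1 : θ < 1 := by
    obtain ⟨u, hu, hlen⟩ := exists_long_smooth (n₀ + 1)
    have h1 := H u hu (by omega)
    have h2 : ((u.count 2 : ℝ) / u.length) ≤ 1 := by
      apply div_le_one_of_le₀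
      · exact_mod_cast List.count_le_length
      · positivity
    linarith
  have h1θ : (0:ℝ) < 1 - θ := by linarith
  set a : ℝ := (n₀ + 2) / (1 - θ) with ha_def
  have ha_eq : a * (1 - θ) = n₀ + 2 :=
    div_mul_cancel₀ _ (ne_of_gt h1θ)
  have ha_ge : (n₀ + 2 : ℝ) ≤ a := by
    rw [ha_def, le_div_iff₀ h1θ]
    nlinarith
  have ha1 : (1:ℝ) < a := by
    have : (0:ℝ) ≤ (n₀ : ℝ) := Nat.cast_nonneg _
    linarith
  have ha0 : (0:ℝ) < a := by linarith
  have h2θ : (1:ℝ) < 2 - θ := by linarith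
  have h2θ0 : (0:ℝ) < 2 - θ := by linarith
  -- main bound
  have key : ∀ n : ℕ, ∀ w : List ℕ, w.length ≤ n → SmoothWord w →
      (w.length : ℝ) + a ≤ a * (2 - θ) ^ (height w) := by
    intro n
    induction n with
    | zero =>
      intro w hlen _
      have : w = [] := List.length_eq_zero_iff.1 (Nat.le_zero.1 hlen)
      subst this
      simp [height_nil]
    | succ m ih =>
      intro w hlen hw
      by_cases hwn : w = []
      · subst hwn; simp [height_nil]
      · set D := wderiv w with hD
        have hDsm : SmoothWord D := smooth_deriv hw
        have hDlt : D.length < w.length := wderiv_length_lt w hwn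
        have hIH := ih D (by omega) hDsm
        have hDword : IsWord D := smooth_isWord hDsm
        -- |w| ≤ (2-θ)|D| + (n₀+2)  (real)
        have hwD : (w.length : ℝ) ≤ (2 - θ) * D.length + (n₀ + 2) := by
          have hsum : w.length ≤ D.length + D.count 2 + 2 := by
            have h1 := wderiv_sum_ge w
            rw [← hD] at h1
            have h2 := count_sum hDword
            omega
          have hsumR : (w.length : ℝ) ≤ (D.length : ℝ) + (D.count 2 : ℝ) + 2 := by
            exact_mod_cast hsum
          by_cases hcase : n₀ < D.length
          · have hbar := H (D.map bar) (smooth_bar hDsm) (by simpa using hcase)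
            rw [count_map_bar] at hbar
            have hlenpos : (0:ℝ) < ((D.map bar).length : ℝ) := by
              simp only [List.length_map]
              exact_mod_cast Nat.zero_lt_of_lt hcase
            have hmul : θ * (D.length : ℝ) < (D.count 1 : ℝ) := by
              rw [lt_div_iff₀ (by simpa using hlenpos)] at hbar
              simpa [mul_comm] using hbar
            have hct : (D.count 1 : ℝ) + (D.count 2 : ℝ) = (D.length : ℝ) := by
              exact_mod_cast count_one_two hDword
            have : (D.count 2 : ℝ) < (1 - θ) * D.length := by nlinarith
            nlinarith
          · push_neg at hcase
            have h2' : (D.count 2 : ℝ) ≤ (n₀ : ℝ) := by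
              have : D.count 2 ≤ n₀ := le_trans (List.count_le_length) hcase
              exact_mod_cast this
            have hDn : (0:ℝ) ≤ (1 - θ) * D.length := by positivity
            nlinarith
        have hh : height w = height D + 1 := height_succ w hwn
        rw [hh, pow_succ]
        have hX : (0:ℝ) ≤ (2 - θ) ^ (height D) := by positivity
        nlinarith [hIH, hwD, ha_eq, mul_le_mul_of_nonneg_left hIH (le_of_lt h2θ0)]
  -- final constants
  have hL : (0:ℝ) < Real.log (2 - θ) := Real.log_pos h2θ
  have hla : (0:ℝ) < Real.log a := Real.log_pos ha1
  refine ⟨-(Real.log a) / Real.log (2 - θ), a * (2 - θ), by positivity, ?_⟩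
  intro w hw
  have hbound : (w.length : ℝ) < a * (2 - θ) ^ (height w) := by
    have := key w.length w le_rfl hw
    linarith
  by_cases hwn : w = []
  · subst hwn
    simp only [List.length_nil, Nat.cast_zero, Real.log_zero, zero_div, zero_add, height_nil,
      Nat.zero_sub, pow_zero, mul_one, Nat.cast_zero]
    constructor
    · have hdp := div_pos hla hL
      rw [neg_div]
      linarith
    · positivity
  · have hpos := height_pos w hwn
    have hwpos : 0 < w.length := List.length_pos_iff.2 hwn
    constructor
    · have hlog : Real.log w.length < Real.log a + (height w : ℝ) * Real.log (2 - θ) := by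
        have := Real.log_lt_log (by exact_mod_cast hwpos) hbound
        rwa [Real.log_mul (ne_of_gt ha0) (by positivity), Real.log_pow] at this
      have hdiv : Real.log w.length / Real.log (2 - θ)
          < Real.log a / Real.log (2 - θ) + (height w : ℝ) := by
        rw [div_lt_iff₀ hL, add_mul, div_mul_cancel₀ _ (ne_of_gt hL)]
        linarith
      rw [neg_div]
      linarith
    · obtain ⟨k, hk⟩ : ∃ k, height w = k + 1 := ⟨height w - 1, by omega⟩
      have hk1 : height w - 1 = k := by omega
      rw [hk1]
      rw [hk, pow_succ] at hbound
      have heq : a * (2 - θ) * (2 - θ) ^ k = a * (2 - θ) ^ k * (2 - θ) := by ring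
      rw [heq]
      linarith [hbound]
end

section
/- Every smooth word u can be extended on the right by a single letter to a smooth word: there exists α ∈ {1,2} such that uα is smooth. -/
namespace SmoothAux

open List

theorem splitBy_loop_spec (r : ℕ → ℕ → Bool) :
    ∀ (l : List ℕ) (a : ℕ) (g : List ℕ) (gs : List (List ℕ)),
      splitBy.loop r l a g gs
        = gs.reverse ++ (splitBy.loop r l a [] []).modifyHead (g.reverse ++ ·)
  | [], a, g, gs => by simp [splitBy.loop]
  | b :: l, a, g, gs => by
    rw [splitBy.loop, splitBy.loop]
    cases hr : r a b
    · simp only [reverse_singleton]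
      rw [splitBy_loop_spec r l b [] ((a :: g).reverse :: gs),
          splitBy_loop_spec r l b [] [[a]]]
      cases splitBy.loop r l b [] [] <;> simp
    · simp only
      rw [splitBy_loop_spec r l b (a :: g) gs, splitBy_loop_spec r l b [a] []]
      cases splitBy.loop r l b [] [] <;> simp

/-- `incHead` adds one to the first entry. -/
def incHead : List ℕ → List ℕ
  | [] => []
  | x :: t => (x + 1) :: t

/-- `incLast` adds one to the last entry. -/
def incLast : List ℕ → List ℕ
  | [] => []
  | [x] => [x + 1]
  | x :: y :: t => x :: incLast (y :: t)

theorem runLengths_nil : runLengths [] = [] := rfl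

theorem runLengths_singleton (a : ℕ) : runLengths [a] = [1] := rfl

theorem runLengths_cons₂ (a b : ℕ) (t : List ℕ) :
    runLengths (a :: b :: t)
      = if a = b then incHead (runLengths (b :: t)) else 1 :: runLengths (b :: t) := by
  show ((a :: b :: t).splitBy (· = ·)).map List.length = _
  rw [splitBy, splitBy.loop]
  by_cases h : a = b
  · subst h
    simp only [decide_true]
    rw [splitBy_loop_spec _ t a [a] []]
    simp only [if_true]
    show ((splitBy.loop (· = ·) t a [] []).modifyHead ([a] ++ ·)).map _
      = incHead ((splitBy (· = ·) (a :: t)).map List.length)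
    rw [splitBy]
    cases splitBy.loop (· = ·) t a [] [] <;> simp [incHead]
  · simp only [h, decide_false, reverse_singleton]
    rw [splitBy_loop_spec _ t b [] [[a]]]
    simp only [if_false]
    show _ = 1 :: (splitBy (· = ·) (b :: t)).map List.length
    rw [splitBy]
    cases splitBy.loop (· = ·) t b [] [] <;> simp

theorem runLengths_ne_nil : ∀ {w : List ℕ}, w ≠ [] → runLengths w ≠ []
  | [], h => absurd rfl h
  | [_], _ => by simp [runLengths_singleton]
  | a :: b :: t, _ => by
    rw [runLengths_cons₂]
    have H := runLengths_ne_nil (w := b :: t) (by simp)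
    split
    · cases h : runLengths (b :: t)
      · exact absurd h H
      · simp [incHead]
    · simp

theorem sum_runLengths : ∀ w : List ℕ, (runLengths w).sum = w.length
  | [] => rfl
  | [_] => rfl
  | a :: b :: t => by
    rw [runLengths_cons₂]
    have H := sum_runLengths (b :: t)
    have H2 := runLengths_ne_nil (w := b :: t) (by simp)
    split
    · cases h : runLengths (b :: t)
      · exact absurd h H2
      · rw [h] at H
        simp [incHead, ← H]
        omega
    · simp [H]
      omega

theorem one_le_runLengths : ∀ w : List ℕ, ∀ x ∈ runLengths w, 1 ≤ x
  | [] => by simp [runLengths_nil]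
  | [_] => by simp [runLengths_singleton]
  | a :: b :: t => by
    rw [runLengths_cons₂]
    have H := one_le_runLengths (b :: t)
    split
    · cases h : runLengths (b :: t)
      · simp [incHead]
      · rw [h] at H
        simp only [incHead]
        intro x hx
        rcases List.mem_cons.1 hx with rfl | hx
        · omega
        · exact H x (List.mem_cons_of_mem _ hx)
    · intro x hx
      rcases List.mem_cons.1 hx with rfl | hx
      · exact le_rfl
      · exact H x hx

theorem incHead_incLast (l : List ℕ) : incHead (incLast l) = incLast (incHead l) := by
  match l with
  | [] => rfl
  | [x] => rfl
  | x :: y :: t => rfl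

theorem incHead_append_singleton (l : List ℕ) (hl : l ≠ []) (x : ℕ) :
    incHead (l ++ [x]) = incHead l ++ [x] := by
  match l with
  | a :: t => rfl

theorem cons_incLast (x : ℕ) (l : List ℕ) (hl : l ≠ []) :
    incLast (x :: l) = x :: incLast l := by
  match l with
  | a :: t => rfl

theorem incLast_eq (l : List ℕ) (hl : l ≠ []) :
    incLast l = l.dropLast ++ [l.getLast hl + 1] := by
  match l with
  | [x] => rfl
  | x :: y :: t =>
    rw [cons_incLast x (y :: t) (by simp), incLast_eq (y :: t) (by simp)]
    simp [List.getLast_cons]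

theorem getLast?_incLast (l : List ℕ) (hl : l ≠ []) :
    (incLast l).getLast? = some (l.getLast hl + 1) := by
  rw [incLast_eq l hl, List.getLast?_concat]

theorem runLengths_append (w : List ℕ) (hw : w ≠ []) (α : ℕ) :
    runLengths (w ++ [α])
      = if α = w.getLast hw then incLast (runLengths w) else runLengths w ++ [1] := by
  match w with
  | [a] =>
    show runLengths [a, α] = _
    rw [runLengths_cons₂, runLengths_singleton, runLengths_singleton]
    simp only [List.getLast_singleton, incHead, incLast]
    by_cases h : a = α
    · simp [h, eq_comm]
    · rw [if_neg h]
      simp [Ne.symm h]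
  | a :: b :: t =>
    show runLengths (a :: b :: (t ++ [α])) = _
    rw [runLengths_cons₂, ← List.cons_append, runLengths_append (b :: t) (by simp) α]
    have hne := runLengths_ne_nil (w := b :: t) (by simp)
    rw [runLengths_cons₂]
    rw [List.getLast_cons (by simp : b :: t ≠ [])]
    by_cases hab : a = b <;> by_cases hα : α = (b :: t).getLast (by simp) <;>
      simp only [hab, hα, if_true, if_false, if_pos, if_neg]
    · exact incHead_incLast _
    · exact incHead_append_singleton _ hne 1
    · exact (cons_incLast _ _ hne).symm
    · rfl

/-- trim a leading 1 -/
def trim1 (r : List ℕ) : List ℕ := if r.head? = some 1 then r.tail else r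

/-- trim a trailing 1 -/
def trim2 (r : List ℕ) : List ℕ := if r.getLast? = some 1 then r.dropLast else r

theorem wderiv_eq (w : List ℕ) : wderiv w = trim2 (trim1 (runLengths w)) := rfl

theorem trim1_append (r s : List ℕ) (hr : r ≠ []) : trim1 (r ++ s) = trim1 r ++ s := by
  match r with
  | a :: t =>
    show trim1 (a :: (t ++ s)) = _
    unfold trim1
    by_cases h : a = 1 <;> simp [h]

theorem trim2_concat_one (l : List ℕ) : trim2 (l ++ [1]) = l := by
  unfold trim2
  rw [if_pos List.getLast?_concat, List.dropLast_concat]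

theorem getLast?_cons' {h : ℕ} {rest : List ℕ} (hr : rest ≠ []) :
    (h :: rest).getLast? = rest.getLast? := by
  match rest with
  | a :: t => exact List.getLast?_cons_cons ..

theorem getLast?_trim1 {r : List ℕ} (h : r.getLast? = some 2) :
    (trim1 r).getLast? = some 2 := by
  match r with
  | [] => simpa using h
  | [a] =>
    unfold trim1
    split
    · next hh => simp at hh h; omega
    · exact h
  | a :: b :: t =>
    unfold trim1
    split
    · rw [← h]
      exact (List.getLast?_cons_cons ..).symm
    · exact h

theorem wderiv_append_of_two {u : List ℕ} (hu : u ≠ [])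
    (h2 : (runLengths u).getLast? = some 2) {α : ℕ}
    (hα : α ≠ u.getLast hu) :
    wderiv (u ++ [α]) = wderiv u := by
  have hr := runLengths_ne_nil hu
  rw [wderiv_eq, wderiv_eq, runLengths_append u hu α, if_neg hα,
    trim1_append _ _ hr, trim2_concat_one]
  have h3 : trim2 (trim1 (runLengths u)) = trim1 (runLengths u) := by
    unfold trim2
    rw [if_neg (by rw [getLast?_trim1 h2]; simp)]
  rw [h3]
theorem getLast_of_getLast? {r : List ℕ} {c : ℕ} (h : r.getLast? = some c)
    (hr : r ≠ []) : r.getLast hr = c := by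
  rw [List.getLast?_eq_getLast hr] at h
  exact Option.some_injective _ h

theorem eq_dropLast_concat {l : List ℕ} {c : ℕ} (h : l.getLast? = some c) :
    l = l.dropLast ++ [c] := by
  have hl : l ≠ [] := by rintro rfl; simp at h
  conv_lhs => rw [← List.dropLast_append_getLast hl]
  rw [getLast_of_getLast? h hl]

theorem trim1_cons (a : ℕ) (l : List ℕ) :
    trim1 (a :: l) = if a = 1 then l else a :: l := by
  unfold trim1
  by_cases h : a = 1 <;> simp [h]

theorem wderiv_append_of_one_ne {u : List ℕ} (hu : u ≠ [])
    (hlen : 2 ≤ (runLengths u).length)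
    (h1 : (runLengths u).getLast? = some 1) {α : ℕ}
    (hα : α ≠ u.getLast hu) :
    wderiv (u ++ [α]) = wderiv u ++ [1] := by
  have hr := runLengths_ne_nil hu
  rw [wderiv_eq, wderiv_eq, runLengths_append u hu α, if_neg hα,
    trim1_append _ _ hr, trim2_concat_one]
  match hl : runLengths u, hlen, h1 with
  | a :: b :: t, _, h1 =>
    rw [trim1_cons]
    have hgl : (b :: t).getLast? = some 1 := by
      rw [← h1]; exact (List.getLast?_cons_cons ..).symm
    split
    · rw [trim2, if_pos hgl]
      exact eq_dropLast_concat hgl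
    · rw [trim2, if_pos h1]
      exact eq_dropLast_concat h1

theorem wderiv_append_of_one_eq {u : List ℕ} (hu : u ≠ [])
    (hlen : 2 ≤ (runLengths u).length)
    (h1 : (runLengths u).getLast? = some 1) :
    wderiv (u ++ [u.getLast hu]) = wderiv u ++ [2] := by
  have hr := runLengths_ne_nil hu
  rw [wderiv_eq, wderiv_eq, runLengths_append u hu _, if_pos rfl]
  match hl : runLengths u, hlen, h1 with
  | a :: b :: t, _, h1 =>
    have hbt : (b :: t : List ℕ) ≠ [] := by simp
    have hgl : (b :: t).getLast? = some 1 := by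
      rw [← h1]; exact (List.getLast?_cons_cons ..).symm
    have hgl' : (b :: t).getLast hbt = 1 := getLast_of_getLast? hgl hbt
    have hinc : (incLast (b :: t)).getLast? = some 2 := by
      rw [getLast?_incLast _ hbt, hgl']
    rw [cons_incLast a _ hbt, trim1_cons, trim1_cons]
    split
    · rw [trim2, if_neg (by rw [hinc]; simp), trim2, if_pos hgl,
        incLast_eq _ hbt, hgl']
    · rw [trim2, if_neg, trim2, if_pos h1]
      · rw [show a :: incLast (b :: t) = incLast (a :: b :: t) from
          (cons_incLast a _ hbt).symm, incLast_eq _ (by simp),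
          List.getLast_cons hbt, hgl']
      · rw [show (a :: incLast (b :: t)).getLast? = (incLast (b :: t)).getLast? from
          getLast?_cons' (by rw [incLast_eq _ hbt]; simp), hinc]
        simp

theorem cube_decomp {w : List ℕ} {α c : ℕ} (h : [c,c,c] <:+: w ++ [α]) :
    [c,c,c] <:+: w ∨ (α = c ∧ ∃ v, w = v ++ [c, c]) := by
  have h2 : ([c,c,c] : List ℕ) <:+: α :: w.reverse := by
    simpa using List.reverse_infix.2 h
  rcases List.infix_cons_iff.1 h2 with hp | hi
  · obtain ⟨s, hs⟩ := hp
    right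
    have hs' : c :: c :: c :: s = α :: w.reverse := hs
    injection hs' with h1 h2
    refine ⟨h1.symm, s.reverse, ?_⟩
    rw [← List.reverse_reverse w, ← h2]
    simp
  · left
    have : ([c,c,c] : List ℕ).reverse <:+: w.reverse := by simpa using hi
    exact List.reverse_infix.1 this

theorem smooth_iff (w : List ℕ) :
    SmoothWord w ↔ Differentiable' w ∧ SmoothWord (wderiv w) := by
  constructor
  · intro h
    exact ⟨h 0, fun k => by
      rw [← Function.iterate_succ_apply]; exact h (k + 1)⟩
  · rintro ⟨h0, h⟩ k
    cases k with
    | zero => exact h0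
    | succ k => rw [Function.iterate_succ_apply]; exact h k

theorem diff_nil : Differentiable' [] := by
  refine ⟨fun a h => absurd h (by simp), ?_, ?_⟩ <;> simp

theorem smooth_nil : SmoothWord [] := by
  intro k
  rw [Function.iterate_fixed rfl k]
  exact diff_nil

theorem smooth_wderiv {w : List ℕ} (h : SmoothWord w) : SmoothWord (wderiv w) :=
  ((smooth_iff w).1 h).2

theorem smooth_of_wderiv_nil {w : List ℕ} (h1 : Differentiable' w)
    (h2 : wderiv w = []) : SmoothWord w :=
  (smooth_iff w).2 ⟨h1, h2 ▸ smooth_nil⟩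

theorem len_le_sum : ∀ l : List ℕ, (∀ x ∈ l, 1 ≤ x) → l.length ≤ l.sum
  | [], _ => le_rfl
  | a :: t, h => by
    have ht := len_le_sum t (fun x hx => h x (List.mem_cons_of_mem _ hx))
    have ha := h a (by simp)
    simp only [List.length_cons, List.sum_cons]
    omega

theorem trim2_length_le (l : List ℕ) : (trim2 l).length ≤ l.length := by
  unfold trim2
  split
  · simpa using Nat.sub_le _ 1
  · exact le_rfl

theorem wderiv_length_lt {w : List ℕ} (hw : w ≠ []) :
    (wderiv w).length < w.length := by
  rw [wderiv_eq]
  have hsum := sum_runLengths w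
  have hone := one_le_runLengths w
  have hr : runLengths w ≠ [] := runLengths_ne_nil hw
  have hlen := len_le_sum (runLengths w) hone
  have hwlen : 1 ≤ w.length := by
    cases w
    · exact absurd rfl hw
    · simp
  match hl : runLengths w, hr, hone, hlen, hsum with
  | a :: rest, _, hone, hlen, hsum =>
    rw [trim1_cons]
    have hrest := len_le_sum rest (fun x hx => hone x (List.mem_cons_of_mem _ hx))
    split
    · next h =>
      subst h
      have := trim2_length_le rest
      simp only [List.length_cons, List.sum_cons] at hlen hsum
      omega
    · next h =>
      have ha : 1 ≤ a := hone a (by simp)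
      have ha2 : 2 ≤ a := by omega
      have := trim2_length_le (a :: rest)
      simp only [List.length_cons, List.sum_cons] at this hsum ⊢
      omega

theorem runLengths_le_two :
    ∀ w : List ℕ, IsWord w → ¬([1,1,1] <:+: w) → ¬([2,2,2] <:+: w) →
      ∀ x ∈ runLengths w, x ≤ 2
  | [] => by simp [runLengths_nil]
  | [a] => by simp [runLengths_singleton]
  | a :: b :: t => by
    intro hw h1 h2
    have hw' : IsWord (b :: t) := fun x hx => hw x (List.mem_cons_of_mem _ hx)
    have h1' : ¬([1,1,1] <:+: b :: t) := fun hh => h1 (List.infix_cons hh)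
    have h2' : ¬([2,2,2] <:+: b :: t) := fun hh => h2 (List.infix_cons hh)
    have H := runLengths_le_two (b :: t) hw' h1' h2'
    rw [runLengths_cons₂]
    split
    · next hab =>
      subst hab
      cases t with
      | nil =>
        rw [runLengths_singleton]
        intro x hx
        simp only [incHead] at hx
        simp at hx
        omega
      | cons c t' =>
        have hbc : a ≠ c := by
          rintro rfl
          have hcube : ∀ d : ℕ, ([d,d,d] : List ℕ) <:+: d :: d :: d :: t' :=
            fun d => ⟨[], t', rfl⟩
          rcases hw a (by simp) with rfl | rfl
          · exact h1 (hcube 1)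
          · exact h2 (hcube 2)
        rw [runLengths_cons₂, if_neg hbc]
        simp only [incHead]
        intro x hx
        rcases List.mem_cons.1 hx with rfl | hx
        · omega
        · exact H x (by rw [runLengths_cons₂, if_neg hbc]; exact List.mem_cons_of_mem _ hx)
    · intro x hx
      rcases List.mem_cons.1 hx with rfl | hx
      · omega
      · exact H x hx

theorem bar_mem (a : ℕ) : bar a = 1 ∨ bar a = 2 := by unfold bar; split <;> simp

theorem bar_ne {a : ℕ} (h : a = 1 ∨ a = 2) : bar a ≠ a := by
  rcases h with rfl | rfl <;> simp [bar]

theorem diff_append {u : List ℕ} {α : ℕ} (hd : Differentiable' u) (hα : α = 1 ∨ α = 2)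
    (hnc : ¬ ∃ v, u = v ++ [α, α]) : Differentiable' (u ++ [α]) := by
  refine ⟨?_, ?_, ?_⟩
  · intro x hx
    rcases List.mem_append.1 hx with hx | hx
    · exact hd.1 x hx
    · simp at hx; subst hx; exact hα
  · intro h
    rcases cube_decomp h with h' | ⟨rfl, v, hv⟩
    · exact hd.2.1 h'
    · exact hnc ⟨v, hv⟩
  · intro h
    rcases cube_decomp h with h' | ⟨rfl, v, hv⟩
    · exact hd.2.2 h'
    · exact hnc ⟨v, hv⟩

theorem no_double_suffix_of_ne {u : List ℕ} (hu : u ≠ []) {α : ℕ}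
    (hα : α ≠ u.getLast hu) : ¬ ∃ v, u = v ++ [α, α] := by
  rintro ⟨v, rfl⟩
  apply hα
  have hg : (v ++ [α, α]).getLast? = some α := by
    rw [show v ++ [α, α] = (v ++ [α]) ++ [α] by simp]
    exact List.getLast?_concat
  exact (getLast_of_getLast? hg hu).symm

theorem no_double_suffix_of_last_one {u : List ℕ} (hu : u ≠ [])
    (h1 : (runLengths u).getLast? = some 1) {α : ℕ} : ¬ ∃ v, u = v ++ [α, α] := by
  rintro ⟨v, hv⟩
  have hv1 : (v ++ [α] : List ℕ) ≠ [] := by simp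
  have hgl : (v ++ [α]).getLast hv1 = α := getLast_of_getLast? List.getLast?_concat hv1
  have heq : v ++ [α, α] = (v ++ [α]) ++ [α] := by simp
  rw [hv, heq, runLengths_append _ hv1 α, if_pos hgl.symm] at h1
  have hne := runLengths_ne_nil hv1
  rw [getLast?_incLast _ hne] at h1
  have hmem := List.getLast_mem hne
  have hle := one_le_runLengths (v ++ [α]) _ hmem
  simp only [Option.some.injEq] at h1
  omega

theorem smooth_singleton {a : ℕ} (ha : a = 1 ∨ a = 2) : SmoothWord [a] := by
  rcases ha with rfl | rfl
  · exact smooth_of_wderiv_nil ⟨fun x hx => Or.inl (by simpa using hx), by decide, by decide⟩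
      (by decide)
  · exact smooth_of_wderiv_nil ⟨fun x hx => Or.inr (by simpa using hx), by decide, by decide⟩
      (by decide)

theorem smooth_12 : SmoothWord [1, 2] :=
  smooth_of_wderiv_nil ⟨fun x hx => by simp at hx; omega, by decide, by decide⟩ (by decide)

theorem smooth_21 : SmoothWord [2, 1] :=
  smooth_of_wderiv_nil ⟨fun x hx => by simp at hx; omega, by decide, by decide⟩ (by decide)

theorem main : ∀ (n : ℕ) (u : List ℕ), SmoothWord u → u.length ≤ n →
    ∃ α, (α = 1 ∨ α = 2) ∧ SmoothWord (u ++ [α]) := by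
  intro n
  induction n with
  | zero =>
    intro u _ hlen
    have hu0 : u = [] := List.eq_nil_of_length_eq_zero (Nat.le_zero.1 hlen)
    subst hu0
    exact ⟨1, Or.inl rfl, smooth_singleton (Or.inl rfl)⟩
  | succ n ih =>
    intro u hu hlen
    match u, hu, hlen with
    | [], _, _ => exact ⟨1, Or.inl rfl, smooth_singleton (Or.inl rfl)⟩
    | [a], hu, _ =>
      rcases (hu 0).1 a (by simp) with rfl | rfl
      · exact ⟨2, Or.inr rfl, smooth_12⟩
      · exact ⟨1, Or.inl rfl, smooth_21⟩
    | a :: b :: t, hu, hlen =>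
      set w := a :: b :: t with hwdef
      have hw : w ≠ [] := by simp [hwdef]
      have hd0 : Differentiable' w := hu 0
      have hr : runLengths w ≠ [] := runLengths_ne_nil hw
      have hℓ? := List.getLast?_eq_getLast hr
      have hmem := List.getLast_mem hr
      have h1le := one_le_runLengths w _ hmem
      have hle2 := runLengths_le_two w hd0.1 hd0.2.1 hd0.2.2 _ hmem
      have ha' : w.getLast hw = 1 ∨ w.getLast hw = 2 := hd0.1 _ (List.getLast_mem hw)
      by_cases h2 : (runLengths w).getLast hr = 2
      · refine ⟨bar (w.getLast hw), bar_mem _, ?_⟩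
        have hαne : bar (w.getLast hw) ≠ w.getLast hw := bar_ne ha'
        rw [smooth_iff]
        refine ⟨diff_append hd0 (bar_mem _) (no_double_suffix_of_ne hw hαne), ?_⟩
        rw [wderiv_append_of_two hw (by rw [hℓ?, h2]) hαne]
        exact smooth_wderiv hu
      · have h1 : (runLengths w).getLast hr = 1 := by omega
        have h1? : (runLengths w).getLast? = some 1 := by rw [hℓ?, h1]
        have hrlen2 : 2 ≤ (runLengths w).length := by
          by_contra hcon
          have hpos := List.length_pos_iff.2 hr
          have hone : (runLengths w).length = 1 := by omega
          obtain ⟨x, hx⟩ := List.length_eq_one_iff.1 hone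
          have hsum := sum_runLengths w
          rw [hx] at hsum h1?
          simp at h1?
          rw [h1?] at hsum
          simp [hwdef] at hsum
        have hws := smooth_wderiv hu
        have hwl : (wderiv w).length ≤ n := by
          have := wderiv_length_lt hw
          omega
        obtain ⟨β, hβ, hsm⟩ := ih (wderiv w) hws hwl
        rcases hβ with rfl | rfl
        · refine ⟨bar (w.getLast hw), bar_mem _, ?_⟩
          have hαne : bar (w.getLast hw) ≠ w.getLast hw := bar_ne ha'
          rw [smooth_iff]
          refine ⟨diff_append hd0 (bar_mem _) (no_double_suffix_of_ne hw hαne), ?_⟩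
          rw [wderiv_append_of_one_ne hw hrlen2 h1? hαne]
          exact hsm
        · refine ⟨w.getLast hw, ha', ?_⟩
          rw [smooth_iff]
          refine ⟨diff_append hd0 ha' (no_double_suffix_of_last_one hw h1?), ?_⟩
          rw [wderiv_append_of_one_eq hw hrlen2 h1?]
          exact hsm

end SmoothAux

/-- Every smooth word extends on the right by a single letter to a smooth word. -/
theorem stmt19 (u : List ℕ) (hu : SmoothWord u) :
    ∃ α, (α = 1 ∨ α = 2) ∧ SmoothWord (u ++ [α]) :=
  SmoothAux.main u.length u hu le_rfl
end
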